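/- arXiv:2205.01200 — 2 statements merged into one kernel-verified Lean document; each statement's English description precedes it below -/
import Mathlib

section
/- If L is a finite geometric lattice with generating set its atoms, then every minor of (L, irr(L)) is again a minimally generated geometric lattice; more precisely, the minors are exactly the generator enriched lattices ⟨ℓ₁,…,ℓ_k | ℓ⟩ where each ℓ_i covers ℓ in L. -/
open Finset

/-- A generator-enriched lattice datum inside an ambient lattice `L`:
a minimal element `z` together with a finite generating set of elements
strictly above `z`. The underlying set of elements consists of all joins
of `z` with subsets of the generating set. -/
structure GEL (L : Type*) [Lattice L] [DecidableEq L] where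
  z : L
  gens : Finset L
  lt_gens : ∀ g ∈ gens, z < g

namespace GEL

variable {L K : Type*} [Lattice L] [OrderBot L] [DecidableEq L]

/-- The underlying set of elements of a generator enriched lattice. -/
def carrier (M : GEL L) : Finset L :=
  M.gens.powerset.image fun X => X.sup id ⊔ M.z

/-- Deletion of a set of generators. -/
def delete (M : GEL L) (I : Finset L) : GEL L :=
  ⟨M.z, M.gens \ I, fun g hg => M.lt_gens g (Finset.mem_sdiff.mp hg).1⟩

/-- Restriction to a set of generators. -/
def restrict (M : GEL L) (I : Finset L) : GEL L :=
  M.delete (M.gens \ I)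

/-- Contraction by a set of generators. -/
def contract (M : GEL L) (I : Finset L) : GEL L :=
  ⟨I.sup id ⊔ M.z,
   (M.gens.image fun g => g ⊔ (I.sup id ⊔ M.z)).erase (I.sup id ⊔ M.z),
   fun g hg => by
     obtain ⟨hne, hg'⟩ := Finset.mem_erase.mp hg
     obtain ⟨h, -, rfl⟩ := Finset.mem_image.mp hg'
     exact lt_of_le_of_ne le_sup_right (Ne.symm hne)⟩

open Classical in
/-- Contraction by an element: contract by all generators below it. -/
noncomputable def contractEl (M : GEL L) (ℓ : L) : GEL L :=
  M.contract (M.gens.filter fun g => g ≤ ℓ)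

/-- A single deletion or contraction step. -/
def Step (M N : GEL L) : Prop :=
  ∃ I ⊆ M.gens, N = M.delete I ∨ N = M.contract I

/-- `Minor M N` : `N` is a minor of `M`, i.e. obtained from `M` by a finite
sequence of deletions and contractions. -/
def Minor (M N : GEL L) : Prop :=
  Relation.ReflTransGen Step M N

/-- The generator enriched lattice on a lattice with `⊥`, with the given generating set. -/
def ofGens (G : Finset L) (hG : ∀ g ∈ G, (⊥ : L) < g) : GEL L :=
  ⟨⊥, G, hG⟩

/-- The underlying type of the minor poset of `T`: all minors of `T`
together with an adjoined minimum `none`. -/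
abbrev MP (T : GEL L) := Option {M : GEL L // T.Minor M}

/-- The order relation of the minor poset. -/
def mple (T : GEL L) : MP T → MP T → Prop
  | none, _ => True
  | some _, none => False
  | some A, some B => B.1.Minor A.1

/-- The rank function of the minor poset. -/
def mrank (T : GEL L) : MP T → ℕ
  | none => 0
  | some A => A.1.gens.card + 1

/-- A parallel: an element `ℓ` and distinct generators `g, h` with
`g ⊔ ℓ = h ⊔ ℓ ≠ ℓ`. -/
def HasParallel (M : GEL L) : Prop :=
  ∃ ℓ ∈ M.carrier, ∃ g ∈ M.gens, ∃ h ∈ M.gens,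
    g ≠ h ∧ g ⊔ ℓ = h ⊔ ℓ ∧ g ⊔ ℓ ≠ ℓ

/-- Isomorphism of generator enriched lattices: a join-preserving bijection of the
underlying sets carrying the generating set onto the generating set. -/
def GIso [Lattice K] [OrderBot K] [DecidableEq K] (M : GEL L) (N : GEL K) : Prop :=
  ∃ f : L → K, Set.BijOn f ↑M.carrier ↑N.carrier ∧
    (∀ a ∈ M.carrier, ∀ b ∈ M.carrier, f (a ⊔ b) = f a ⊔ f b) ∧
    f '' ↑M.gens = ↑N.gens

open Classical in
/-- The image generator enriched lattice `⟨f(I) | f(z)⟩` of a strong map. -/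
noncomputable def map [Lattice K] [DecidableEq K] (f : L → K) (M : GEL L) : GEL K :=
  ⟨f M.z, (M.gens.image f).filter fun y => f M.z < y,
   fun g hg => (Finset.mem_filter.mp hg).2⟩

/-- `T` lifts join irreducibles: for every `ℓ` and generator `g` with `g ≰ ℓ`,
the element `g ⊔ ℓ` is join irreducible in the interval `[ℓ, ⊤]`. -/
def LiftsJI (T : GEL L) : Prop :=
  ∀ ℓ : L, ∀ g ∈ T.gens, ¬ g ≤ ℓ →
    ∀ a b : L, ℓ ≤ a → ℓ ≤ b → g ⊔ ℓ = a ⊔ b → g ⊔ ℓ = a ∨ g ⊔ ℓ = b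

end GEL
lemma GEL.ext' {L : Type*} [Lattice L] [DecidableEq L] {M N : GEL L}
    (h1 : M.z = N.z) (h2 : M.gens = N.gens) : M = N := by
  cases M; cases N; simp_all

/-- For a finite geometric lattice `L`, minimally generated (generators = atoms),
the minors of `(L, irr L)` are exactly the generator enriched lattices
`⟨ℓ₁, …, ℓ_k | ℓ⟩` with each `ℓ_i` covering `ℓ`; in particular every minor is
again minimally generated and geometric. -/
theorem geometric_minors {L : Type*} [Lattice L] [OrderBot L] [DecidableEq L]
    [Fintype L]
    (hsemimod : ∀ a b : L, a ⊓ b ⋖ a → b ⋖ a ⊔ b)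
    (hatomistic : ∀ x : L, ∃ S : Finset L, (∀ a ∈ S, IsAtom a) ∧ x = S.sup id)
    (T : GEL L) (hz : T.z = ⊥) (hgens : ∀ g : L, g ∈ T.gens ↔ IsAtom g)
    (M : GEL L) :
    T.Minor M ↔ ∃ (ℓ : L) (S : Finset L), (∀ x ∈ S, ℓ ⋖ x) ∧
      M.z = ℓ ∧ M.gens = S := by
  classical
  constructor
  · intro h
    refine ⟨M.z, M.gens, ?_, rfl, rfl⟩
    have key : ∀ N : GEL L, T.Minor N → ∀ g ∈ N.gens, N.z ⋖ g := by
      intro N hN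
      induction hN with
      | refl =>
        intro g hg
        rw [hz]
        exact ((hgens g).mp hg).bot_covBy
      | tail hNb step ih =>
        rename_i b c
        obtain ⟨I, hI, hc⟩ := step
        rcases hc with rfl | rfl
        · intro g hg
          exact ih g (Finset.mem_sdiff.mp hg).1
        · intro g hg
          simp only [GEL.contract] at hg ⊢
          set z' := I.sup id ⊔ b.z with hz'
          obtain ⟨hne, hg'⟩ := Finset.mem_erase.mp hg
          obtain ⟨a, ha, rfl⟩ := Finset.mem_image.mp hg'
          have hcov : b.z ⋖ a := ih a ha
          have hle : b.z ≤ a ⊓ z' := le_inf hcov.1.le le_sup_right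
          have hiz : a ⊓ z' = b.z := by
            rcases lt_or_eq_of_le (inf_le_left : a ⊓ z' ≤ a) with hlt | heq
            · by_contra hne2
              exact hcov.2 (lt_of_le_of_ne hle (Ne.symm hne2)) hlt
            · exfalso
              apply hne
              have haz : a ≤ z' := by rw [← heq]; exact inf_le_right
              exact sup_eq_right.mpr haz
          have : a ⊓ z' ⋖ a := hiz ▸ hcov
          exact hsemimod a z' this
    exact key M h
  · rintro ⟨ℓ, S, hcov, hzM, hgM⟩
    set I : Finset L := T.gens.filter (fun g => g ≤ ℓ) with hIdef
    have hI : I ⊆ T.gens := Finset.filter_subset _ _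
    have hsup : I.sup id = ℓ := by
      apply le_antisymm
      · exact Finset.sup_le fun a ha => (Finset.mem_filter.mp ha).2
      · obtain ⟨S₀, hS₀atoms, hS₀⟩ := hatomistic ℓ
        rw [hS₀]
        apply Finset.sup_le
        intro a ha
        have haT : a ∈ T.gens := (hgens a).mpr (hS₀atoms a ha)
        have haℓ : a ≤ ℓ := hS₀ ▸ Finset.le_sup (f := id) ha
        exact Finset.le_sup (f := id) (Finset.mem_filter.mpr ⟨haT, haℓ⟩)
    set C := T.contract I with hC
    have hCz : C.z = ℓ := by
      simp [hC, GEL.contract, hsup, hz]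
    have hSC : S ⊆ C.gens := by
      intro x hx
      have hcx : ℓ ⋖ x := hcov x hx
      simp only [hC, GEL.contract, hsup, hz, sup_bot_eq]
      rw [Finset.mem_erase]
      constructor
      · exact hcx.1.ne'
      · obtain ⟨S₀, hS₀atoms, hS₀⟩ := hatomistic x
        have : ∃ a ∈ S₀, ¬ a ≤ ℓ := by
          by_contra hall
          push_neg at hall
          exact absurd (hS₀ ▸ Finset.sup_le hall) (not_le_of_gt hcx.1)
        obtain ⟨a, haS₀, haℓ⟩ := this
        have hax : a ≤ x := hS₀ ▸ Finset.le_sup (f := id) haS₀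
        refine Finset.mem_image.mpr ⟨a, (hgens a).mpr (hS₀atoms a haS₀), ?_⟩
        have h1 : ℓ < a ⊔ ℓ := lt_of_le_of_ne le_sup_right
          (fun h => haℓ (le_sup_left.trans h.symm.le))
        have h2 : a ⊔ ℓ ≤ x := sup_le hax hcx.1.le
        rcases lt_or_eq_of_le h2 with hlt | heq
        · exact absurd hlt (hcx.2 h1)
        · exact heq
    have hMeq : M = C.delete (C.gens \ S) := by
      apply GEL.ext'
      · simp [GEL.delete, hCz, hzM]
      · simp only [GEL.delete]
        rw [Finset.sdiff_sdiff_self_left, Finset.inter_eq_right.mpr hSC, hgM]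
    exact Relation.ReflTransGen.head ⟨I, hI, Or.inr rfl⟩
      (Relation.ReflTransGen.single ⟨C.gens \ S, Finset.sdiff_subset, Or.inl hMeq⟩)
end

section
/- For any generator enriched lattice (L,G), the minor poset M(L,G) is thin: every interval of length 2 in M(L,G) is isomorphic to the Boolean algebra B₂, i.e., contains exactly two elements strictly between its endpoints. -/
open Finset

namespace GEL

variable {L : Type*} [Lattice L] [OrderBot L] [DecidableEq L]

open Classical

set_option linter.unusedSectionVars false
set_option linter.unusedVariables false

lemma gext {M N : GEL L} (hz : M.z = N.z) (hg : M.gens = N.gens) : M = N := by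
  cases M; cases N; simp_all

lemma z_notMem_gens (M : GEL L) : M.z ∉ M.gens := fun h => lt_irrefl _ (M.lt_gens _ h)

/-- The generator set of the contraction to `ℓ`. -/
def cg (M : GEL L) (ℓ : L) : Finset L := (M.gens.image (· ⊔ ℓ)).erase ℓ

lemma contract_z (M : GEL L) (I : Finset L) : (M.contract I).z = I.sup id ⊔ M.z := rfl

lemma contract_gens (M : GEL L) (I : Finset L) :
    (M.contract I).gens = M.cg (I.sup id ⊔ M.z) := rfl

lemma delete_z (M : GEL L) (I : Finset L) : (M.delete I).z = M.z := rfl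

lemma delete_gens (M : GEL L) (I : Finset L) : (M.delete I).gens = M.gens \ I := rfl

lemma lt_of_mem_cg {M : GEL L} {ℓ x : L} (h : x ∈ M.cg ℓ) : ℓ < x := by
  obtain ⟨hne, hx⟩ := Finset.mem_erase.mp h
  obtain ⟨g, -, rfl⟩ := Finset.mem_image.mp hx
  exact lt_of_le_of_ne le_sup_right (Ne.symm hne)

lemma image_join_self (M : GEL L) : M.gens.image (· ⊔ M.z) = M.gens := by
  refine Finset.image_congr (fun g hg => ?_) |>.trans Finset.image_id
  exact sup_eq_left.mpr (M.lt_gens g hg).le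

lemma cg_z (M : GEL L) : M.cg M.z = M.gens := by
  unfold cg
  rw [image_join_self, Finset.erase_eq_of_notMem (z_notMem_gens M)]

lemma cg_eq_image_sdiff (M : GEL L) (ℓ : L) :
    M.cg ℓ = (M.gens \ M.gens.filter (· ≤ ℓ)).image (· ⊔ ℓ) := by
  ext x
  simp only [cg, Finset.mem_erase, Finset.mem_image, Finset.mem_sdiff, Finset.mem_filter]
  constructor
  · rintro ⟨hne, g, hg, rfl⟩
    exact ⟨g, ⟨hg, fun h => hne (sup_eq_right.mpr h.2)⟩, rfl⟩
  · rintro ⟨g, ⟨hg, hgl⟩, rfl⟩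
    exact ⟨fun h => hgl ⟨hg, sup_eq_right.mp h⟩, g, hg, rfl⟩

lemma cg_subset_of_gens_subset {M M' : GEL L} (h : M.gens ⊆ M'.gens) (ℓ : L) :
    M.cg ℓ ⊆ M'.cg ℓ :=
  Finset.erase_subset_erase _ (Finset.image_subset_image h)

/-- Characterization of minors. -/
def Rep (M N : GEL L) : Prop :=
  (∃ I ⊆ M.gens, N.z = I.sup id ⊔ M.z) ∧ N.gens ⊆ M.cg N.z

lemma rep_refl (M : GEL L) : Rep M M :=
  ⟨⟨∅, Finset.empty_subset _, by simp⟩, by rw [cg_z]⟩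

lemma rep_z_le {M N : GEL L} (h : Rep M N) : M.z ≤ N.z := by
  obtain ⟨⟨I, -, hz⟩, -⟩ := h
  rw [hz]; exact le_sup_right

lemma rep_canon {M N : GEL L} (h : Rep M N) :
    N.z = (M.gens.filter (· ≤ N.z)).sup id ⊔ M.z := by
  obtain ⟨⟨I, hI, hz⟩, -⟩ := h
  apply le_antisymm
  · conv_lhs => rw [hz]
    refine sup_le_sup_right (Finset.sup_le fun g hg => ?_) _
    refine Finset.le_sup (f := id) (Finset.mem_filter.mpr ⟨hI hg, ?_⟩)
    rw [hz]; exact le_sup_of_le_left (Finset.le_sup (f := id) hg)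
  · refine sup_le (Finset.sup_le fun g hg => (Finset.mem_filter.mp hg).2) ?_
    rw [hz]; exact le_sup_right

lemma rep_delete {M N : GEL L} (I : Finset L) (h : Rep (M.delete I) N) : Rep M N := by
  obtain ⟨⟨J, hJ, hz⟩, hg⟩ := h
  refine ⟨⟨J, hJ.trans (Finset.sdiff_subset), hz⟩, hg.trans ?_⟩
  exact cg_subset_of_gens_subset (Finset.sdiff_subset) _

lemma rep_contract {M N : GEL L} (I : Finset L) (hI : I ⊆ M.gens)
    (h : Rep (M.contract I) N) : Rep M N := by
  obtain ⟨⟨J, hJ, hz⟩, hg⟩ := h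
  set w := I.sup id ⊔ M.z with hw
  have hwz : (M.contract I).z = w := rfl
  have hcgw : (M.contract I).gens = M.cg w := rfl
  have hwN : w ≤ N.z := by rw [hz, hwz]; exact le_sup_right
  set P := M.gens.filter (fun g => g ⊔ w ∈ J) with hP
  constructor
  · refine ⟨I ∪ P, Finset.union_subset hI (Finset.filter_subset _ _), ?_⟩
    rw [hz, hwz]
    apply le_antisymm
    · refine sup_le (Finset.sup_le fun j hj => ?_) ?_
      · have hj' : j ∈ M.cg w := by rw [hcgw] at hJ; exact hJ hj
        obtain ⟨hne, g, hg', rfl⟩ := by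
          simpa [cg, Finset.mem_erase, Finset.mem_image] using hj'
        have hgP : g ∈ P := Finset.mem_filter.mpr ⟨hg', hj⟩
        refine sup_le ?_ ?_
        · exact le_sup_of_le_left (Finset.le_sup (f := id) (Finset.mem_union_right _ hgP))
        · rw [hw]
          exact sup_le (le_sup_of_le_left (Finset.sup_le fun i hi =>
            Finset.le_sup (f := id) (Finset.mem_union_left _ hi))) le_sup_right
      · rw [hw]
        exact sup_le (le_sup_of_le_left (Finset.sup_le fun i hi =>
          Finset.le_sup (f := id) (Finset.mem_union_left _ hi))) le_sup_right
    · refine sup_le (Finset.sup_le fun g hg' => ?_) ?_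
      · rcases Finset.mem_union.mp hg' with hgI | hgP
        · have : (id g : L) ≤ w := by
            rw [hw]; exact le_sup_of_le_left (Finset.le_sup (f := id) hgI)
          exact this.trans le_sup_right
        · have : g ⊔ w ∈ J := (Finset.mem_filter.mp hgP).2
          have : (g : L) ≤ J.sup id :=
            le_sup_left.trans (Finset.le_sup (f := id) this)
          exact this.trans le_sup_left
      · rw [hw]; exact le_sup_right.trans le_sup_right
  · refine hg.trans fun x hx => ?_
    simp only [cg, Finset.mem_erase, Finset.mem_image] at hx ⊢
    obtain ⟨hne, c, hc, rfl⟩ := hx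
    rw [hcgw] at hc
    obtain ⟨-, g, hg', rfl⟩ := by
      simpa [cg, Finset.mem_erase, Finset.mem_image] using hc
    exact ⟨hne, g, hg', by rw [sup_assoc, sup_eq_right.mpr hwN]⟩

lemma minor_iff_rep {M N : GEL L} : Minor M N ↔ Rep M N := by
  constructor
  · intro h
    induction h using Relation.ReflTransGen.head_induction_on with
    | refl => exact rep_refl N
    | head h' _ ih =>
      obtain ⟨I, hI, hor⟩ := h'
      rcases hor with rfl | rfl
      · exact rep_delete I ih
      · exact rep_contract I hI ih
  · rintro ⟨⟨I, hI, hz⟩, hg⟩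
    have step1 : Step M (M.contract I) := ⟨I, hI, Or.inr rfl⟩
    have hNz : N.z = (M.contract I).z := by rw [hz]; rfl
    have hsub : N.gens ⊆ (M.contract I).gens := by
      rw [contract_gens, ← hz]; exact hg
    have step2 : Step (M.contract I) N := by
      refine ⟨(M.contract I).gens \ N.gens, Finset.sdiff_subset, Or.inl ?_⟩
      refine gext hNz ?_
      rw [delete_gens, Finset.sdiff_sdiff_self_left,
        Finset.inter_eq_right.mpr hsub]
    exact Relation.ReflTransGen.head step1 (Relation.ReflTransGen.head step2 .refl)

lemma minor_rep {M N : GEL L} (h : Minor M N) : Rep M N := minor_iff_rep.mp h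
lemma rep_minor {M N : GEL L} (h : Rep M N) : Minor M N := minor_iff_rep.mpr h

lemma minor_z_le {M N : GEL L} (h : Minor M N) : M.z ≤ N.z := rep_z_le (minor_rep h)

lemma card_cg_add_le (M : GEL L) (ℓ : L) :
    (M.cg ℓ).card + (M.gens.filter (· ≤ ℓ)).card ≤ M.gens.card := by
  rw [cg_eq_image_sdiff]
  have h1 := Finset.card_image_le (s := M.gens \ M.gens.filter (· ≤ ℓ)) (f := (· ⊔ ℓ))
  have h2 := Finset.card_sdiff_of_subset (Finset.filter_subset (· ≤ ℓ) M.gens)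
  have h3 := Finset.card_le_card (Finset.filter_subset (· ≤ ℓ) M.gens)
  omega

lemma filter_nonempty_of_rep {M N : GEL L} (h : Rep M N) (hne : N.z ≠ M.z) :
    (M.gens.filter (· ≤ N.z)).Nonempty := by
  rw [Finset.nonempty_iff_ne_empty]
  intro he
  apply hne
  rw [rep_canon h, he]
  simp

lemma minor_card_le {M N : GEL L} (h : Minor M N) : N.gens.card ≤ M.gens.card := by
  have hr := minor_rep h
  have h1 := Finset.card_le_card hr.2
  have h2 := card_cg_add_le M N.z
  omega

lemma minor_card_lt {M N : GEL L} (h : Minor M N) (hne : N ≠ M) :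
    N.gens.card < M.gens.card := by
  have hr := minor_rep h
  by_cases hz : N.z = M.z
  · have hsub : N.gens ⊆ M.gens := by
      have := hr.2; rwa [hz, cg_z] at this
    have hgne : N.gens ≠ M.gens := fun he => hne (gext hz he)
    exact Finset.card_lt_card (Finset.ssubset_iff_subset_ne.mpr ⟨hsub, hgne⟩)
  · have h1 := Finset.card_le_card hr.2
    have h2 := card_cg_add_le M N.z
    have h3 := Finset.card_pos.mpr (filter_nonempty_of_rep hr hz)
    omega

lemma image_collision {α β : Type*} [DecidableEq α] [DecidableEq β] {s : Finset α}
    {f : α → β} {a b : α} (ha : a ∈ s) (hb : b ∈ s) (hab : a ≠ b) (hf : f a = f b) :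
    s.image f = (s.erase a).image f := by
  apply Finset.Subset.antisymm
  · intro x hx
    obtain ⟨c, hc, rfl⟩ := Finset.mem_image.mp hx
    by_cases hca : c = a
    · subst hca
      exact Finset.mem_image.mpr ⟨b, Finset.mem_erase.mpr ⟨hab.symm, hb⟩, hf.symm⟩
    · exact Finset.mem_image.mpr ⟨c, Finset.mem_erase.mpr ⟨hca, hc⟩, rfl⟩
  · exact Finset.image_subset_image (Finset.erase_subset _ _)

lemma mid_cases {B A C : GEL L} (hcard : B.gens.card = A.gens.card + 2)
    (h1 : Minor B C) (h2 : Minor C A) (hCB : C ≠ B) (hCA : C ≠ A) :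
    C.gens.card = A.gens.card + 1 ∧
    ((C.z = A.z ∧ A.gens ⊆ C.gens ∧ C.gens ⊆ B.cg A.z) ∨
     (∃ d₀ ∈ C.gens, A.z = d₀ ⊔ C.z ∧ (∀ d ∈ C.gens, d ≤ A.z → d = d₀) ∧
        A.gens = (C.gens.erase d₀).image (· ⊔ A.z) ∧ C.z < A.z ∧
        ((C.z = B.z ∧ ∃ f ∈ B.gens, f ∉ C.gens ∧ C.gens = B.gens.erase f) ∨
         (C.z ∈ B.gens ∧ C.gens = B.cg C.z ∧ ∀ g ∈ B.gens, g ≤ C.z → g = C.z)))) := by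
  have r1 := minor_rep h1
  have r2 := minor_rep h2
  have hcC : C.gens.card = A.gens.card + 1 := by
    have ha := minor_card_lt h2 (Ne.symm hCA)
    have hb := minor_card_lt h1 hCB
    omega
  refine ⟨hcC, ?_⟩
  have hCzm : C.z ≤ A.z := minor_z_le h2
  by_cases hl : C.z = A.z
  · refine Or.inl ⟨hl, ?_, by rw [← hl]; exact r1.2⟩
    have := r2.2
    rwa [← hl, cg_z] at this
  · refine Or.inr ?_
    have hlm : C.z < A.z := lt_of_le_of_ne hCzm hl
    -- the filter D₀ is a singleton {d₀}
    have hD0ne := filter_nonempty_of_rep r2 (Ne.symm hl)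
    have hD0card : (C.gens.filter (· ≤ A.z)).card = 1 := by
      have ha := Finset.card_le_card r2.2
      have hb := card_cg_add_le C A.z
      have hcc := Finset.card_pos.mpr hD0ne
      omega
    obtain ⟨d₀, hd₀⟩ := Finset.card_eq_one.mp hD0card
    have hd₀mem : d₀ ∈ C.gens ∧ d₀ ≤ A.z := by
      have : d₀ ∈ C.gens.filter (· ≤ A.z) := by rw [hd₀]; exact Finset.mem_singleton_self d₀
      exact Finset.mem_filter.mp this
    have hmd₀ : A.z = d₀ ⊔ C.z := by
      have := rep_canon r2
      rwa [hd₀, Finset.sup_singleton] at this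
    have huniq : ∀ d ∈ C.gens, d ≤ A.z → d = d₀ := by
      intro d hd hdm
      have : d ∈ C.gens.filter (· ≤ A.z) := Finset.mem_filter.mpr ⟨hd, hdm⟩
      rw [hd₀] at this
      exact Finset.mem_singleton.mp this
    have hHimg : A.gens = (C.gens.erase d₀).image (· ⊔ A.z) := by
      have hsub : A.gens ⊆ (C.gens.erase d₀).image (· ⊔ A.z) := by
        have := r2.2
        rw [cg_eq_image_sdiff, hd₀, ← Finset.erase_eq] at this
        exact this
      refine (Finset.eq_of_subset_of_card_le hsub ?_)
      calc ((C.gens.erase d₀).image (· ⊔ A.z)).card ≤ (C.gens.erase d₀).card :=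
            Finset.card_image_le
        _ = A.gens.card := by rw [Finset.card_erase_of_mem hd₀mem.1]; omega
    refine ⟨d₀, hd₀mem.1, hmd₀, huniq, hHimg, hlm, ?_⟩
    -- now analyse C.z relative to B
    have hSl : (B.gens.filter (· ≤ C.z)).card ≤ 1 := by
      have ha := Finset.card_le_card r1.2
      have hb := card_cg_add_le B C.z
      omega
    rcases Nat.le_one_iff_eq_zero_or_eq_one.mp hSl with h0 | h1'
    · -- C.z = B.z
      have hCz : C.z = B.z := by
        have := rep_canon r1
        rw [Finset.card_eq_zero.mp h0] at this
        simpa using this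
      have hsub : C.gens ⊆ B.gens := by
        have := r1.2; rwa [hCz, cg_z] at this
      have hss : C.gens ⊂ B.gens :=
        Finset.ssubset_iff_subset_ne.mpr ⟨hsub, fun he => by rw [he] at hcC; omega⟩
      obtain ⟨f, hfB, hfC⟩ := Finset.exists_of_ssubset hss
      refine Or.inl ⟨hCz, f, hfB, hfC, ?_⟩
      refine (Finset.eq_of_subset_of_card_le (Finset.subset_erase.mpr ⟨hsub, hfC⟩) ?_)
      rw [Finset.card_erase_of_mem hfB]
      omega
    · -- C.z is a generator of B
      obtain ⟨gs, hgs⟩ := Finset.card_eq_one.mp h1'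
      have hgsmem : gs ∈ B.gens ∧ gs ≤ C.z := by
        have : gs ∈ B.gens.filter (· ≤ C.z) := by
          rw [hgs]; exact Finset.mem_singleton_self gs
        exact Finset.mem_filter.mp this
      have hCzgs : C.z = gs := by
        have := rep_canon r1
        rw [hgs, Finset.sup_singleton] at this
        rw [this]
        exact sup_eq_left.mpr (B.lt_gens gs hgsmem.1).le
      have hcgeq : C.gens = B.cg C.z := by
        refine Finset.eq_of_subset_of_card_le r1.2 ?_
        have hb := card_cg_add_le B C.z
        omega
      refine Or.inr ⟨hCzgs ▸ hgsmem.1, hcgeq, fun g hgB hgle => ?_⟩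
      have : g ∈ B.gens.filter (· ≤ C.z) := Finset.mem_filter.mpr ⟨hgB, hgle⟩
      rw [hgs] at this
      rw [Finset.mem_singleton.mp this, hCzgs]

theorem middle (B A : GEL L) (hBA : Minor B A) (hcard : B.gens.card = A.gens.card + 2) :
    ∃ X Y : GEL L, X ≠ Y ∧
      ∀ C, (Minor B C ∧ Minor C A ∧ C ≠ B ∧ C ≠ A) ↔ (C = X ∨ C = Y) := by
  have repBA := minor_rep hBA
  have hmS : A.z = (B.gens.filter (· ≤ A.z)).sup id ⊔ B.z := rep_canon repBA
  have hH : A.gens ⊆ B.cg A.z := repBA.2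
  have hzm : B.z ≤ A.z := rep_z_le repBA
  have hScard : (B.gens.filter (· ≤ A.z)).card ≤ 2 := by
    have h1 := Finset.card_le_card hH
    have h2 := card_cg_add_le B A.z
    omega
  have hcases : (B.gens.filter (· ≤ A.z)).card = 0 ∨ (B.gens.filter (· ≤ A.z)).card = 1 ∨
      (B.gens.filter (· ≤ A.z)).card = 2 := by omega
  rcases hcases with h0 | h1 | h2
  · -- Case S = ∅ : A.z = B.z
    have hSz : A.z = B.z := by
      rw [Finset.card_eq_zero.mp h0] at hmS
      simpa using hmS
    have hHG : A.gens ⊆ B.gens := by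
      have := hH; rwa [hSz, cg_z] at this
    have hsd : (B.gens \ A.gens).card = 2 := by
      rw [Finset.card_sdiff_of_subset hHG]; omega
    obtain ⟨e₁, e₂, hee, hpair⟩ := Finset.card_eq_two.mp hsd
    have he₁ : e₁ ∈ B.gens ∧ e₁ ∉ A.gens := by
      have : e₁ ∈ B.gens \ A.gens := by rw [hpair]; simp
      exact Finset.mem_sdiff.mp this
    have he₂ : e₂ ∈ B.gens ∧ e₂ ∉ A.gens := by
      have : e₂ ∈ B.gens \ A.gens := by rw [hpair]; simp
      exact Finset.mem_sdiff.mp this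
    have mkpf : ∀ e ∈ B.gens, ∀ g ∈ insert e A.gens, B.z < g := by
      intro e he g hg
      rcases Finset.mem_insert.mp hg with rfl | hg'
      · exact B.lt_gens g he
      · exact B.lt_gens g (hHG hg')
    refine ⟨⟨B.z, insert e₁ A.gens, mkpf e₁ he₁.1⟩, ⟨B.z, insert e₂ A.gens, mkpf e₂ he₂.1⟩,
      ?_, fun C => ?_⟩
    · intro h
      have := congrArg GEL.gens h
      simp only at this
      have : e₁ ∈ insert e₂ A.gens := this ▸ Finset.mem_insert_self e₁ A.gens
      rcases Finset.mem_insert.mp this with h' | h'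
      · exact hee h'
      · exact he₁.2 h'
    constructor
    · rintro ⟨hm1, hm2, hCB, hCA⟩
      obtain ⟨hcC, hor⟩ := mid_cases hcard hm1 hm2 hCB hCA
      rcases hor with ⟨hCz, hAC, hCG⟩ | ⟨d₀, -, -, -, -, hlt, -⟩
      · rw [hSz, cg_z] at hCG
        have hss : A.gens ⊂ C.gens :=
          Finset.ssubset_iff_subset_ne.mpr ⟨hAC, fun he => by rw [he] at hcC; omega⟩
        obtain ⟨e, heC, heH⟩ := Finset.exists_of_ssubset hss
        have hCgens : C.gens = insert e A.gens := by
          refine (Finset.eq_of_subset_of_card_le (Finset.insert_subset heC hAC) ?_).symm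
          rw [Finset.card_insert_of_notMem heH]; omega
        have he' : e ∈ B.gens \ A.gens := Finset.mem_sdiff.mpr ⟨hCG heC, heH⟩
        rw [hpair] at he'
        have hCzB : C.z = B.z := by rw [hCz, hSz]
        rcases Finset.mem_insert.mp he' with rfl | he''
        · exact Or.inl (gext hCzB hCgens)
        · exact Or.inr (gext hCzB (by rw [hCgens, Finset.mem_singleton.mp he'']))
      · exact absurd (lt_of_lt_of_le hlt (hSz.le.trans (minor_z_le hm1))) (lt_irrefl _)
    · have key : ∀ e, e ∈ B.gens → e ∉ A.gens → ∀ (pf : ∀ g ∈ insert e A.gens, B.z < g),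
          Minor B ⟨B.z, insert e A.gens, pf⟩ ∧ Minor (⟨B.z, insert e A.gens, pf⟩ : GEL L) A ∧
          (⟨B.z, insert e A.gens, pf⟩ : GEL L) ≠ B ∧ (⟨B.z, insert e A.gens, pf⟩ : GEL L) ≠ A := by
        intro e heG heH pf
        refine ⟨rep_minor ⟨⟨∅, Finset.empty_subset _, by simp⟩, ?_⟩,
          rep_minor ⟨⟨∅, Finset.empty_subset _, by simp [hSz]⟩, ?_⟩, ?_, ?_⟩
        · show insert e A.gens ⊆ B.cg B.z
          rw [cg_z]
          exact Finset.insert_subset heG hHG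
        · show A.gens ⊆ cg _ A.z
          have : A.z = (⟨B.z, insert e A.gens, pf⟩ : GEL L).z := hSz
          rw [this, cg_z]
          exact Finset.subset_insert _ _
        · intro h
          have := congrArg (fun M => M.gens.card) h
          simp only at this
          rw [Finset.card_insert_of_notMem heH] at this
          omega
        · intro h
          have := congrArg (fun M => M.gens.card) h
          simp only at this
          rw [Finset.card_insert_of_notMem heH] at this
          omega
      rintro (rfl | rfl)
      · exact key e₁ he₁.1 he₁.2 _
      · exact key e₂ he₂.1 he₂.2 _
  · -- Case |S| = 1
    obtain ⟨sg, hsg⟩ := Finset.card_eq_one.mp h1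
    have hsmem : sg ∈ B.gens ∧ sg ≤ A.z := by
      have : sg ∈ B.gens.filter (· ≤ A.z) := by rw [hsg]; exact Finset.mem_singleton_self sg
      exact Finset.mem_filter.mp this
    have hzs : B.z < sg := B.lt_gens sg hsmem.1
    have hms : A.z = sg := by
      rw [hsg, Finset.sup_singleton] at hmS
      rw [hmS]
      exact sup_eq_left.mpr hzs.le
    have hmz : A.z ≠ B.z := by rw [hms]; exact hzs.ne'
    have hGne : A.gens.card + 2 = B.gens.card := hcard.symm
    have hup : (B.cg A.z).card ≤ A.gens.card + 1 := by
      have h2 := card_cg_add_le B A.z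
      omega
    have hlow : A.gens.card ≤ (B.cg A.z).card := Finset.card_le_card hH
    have hsd1 : (B.gens \ B.gens.filter (· ≤ A.z)).card = A.gens.card + 1 := by
      rw [Finset.card_sdiff_of_subset (Finset.filter_subset _ _)]
      omega
    have hnotS : ∀ u, u ∈ B.gens → ¬ u ≤ A.z → u ∈ B.gens \ B.gens.filter (· ≤ A.z) := by
      intro u hu hule
      exact Finset.mem_sdiff.mpr ⟨hu, fun hin => hule (Finset.mem_filter.mp hin).2⟩
    have hSmem : ∀ u, u ∈ B.gens → u ≤ A.z → u = sg := by
      intro u hu hule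
      have : u ∈ B.gens.filter (· ≤ A.z) := Finset.mem_filter.mpr ⟨hu, hule⟩
      rw [hsg] at this
      exact Finset.mem_singleton.mp this
    by_cases hδ : (B.cg A.z).card = A.gens.card + 1
    · -- δ = 1 : the join map is injective on the non-contracted generators
      have hinj : Set.InjOn (· ⊔ A.z) ↑(B.gens \ B.gens.filter (· ≤ A.z)) := by
        rw [← Finset.card_image_iff, ← cg_eq_image_sdiff, hδ, hsd1]
      have hss : A.gens ⊂ B.cg A.z :=
        Finset.ssubset_iff_subset_ne.mpr ⟨hH, fun he => by rw [← he] at hδ; omega⟩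
      obtain ⟨e, heCg, heH⟩ := Finset.exists_of_ssubset hss
      have hsingle : B.cg A.z \ A.gens = {e} := by
        have hcs : (B.cg A.z \ A.gens).card = 1 := by
          rw [Finset.card_sdiff_of_subset hH]; omega
        obtain ⟨x, hx⟩ := Finset.card_eq_one.mp hcs
        have : e ∈ ({x} : Finset L) := by rw [← hx]; exact Finset.mem_sdiff.mpr ⟨heCg, heH⟩
        rw [hx, Finset.mem_singleton.mp this]
      obtain ⟨f, hf, hfe⟩ := by
        rw [cg_eq_image_sdiff] at heCg
        exact Finset.mem_image.mp heCg
      have hfG : f ∈ B.gens := (Finset.mem_sdiff.mp hf).1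
      have hfm : ¬ f ≤ A.z := fun hle => (Finset.mem_sdiff.mp hf).2 (Finset.mem_filter.mpr ⟨hfG, hle⟩)
      have hfsg : f ≠ sg := fun he => hfm (he ▸ hsmem.2)
      refine ⟨⟨A.z, B.cg A.z, fun x hx => lt_of_mem_cg hx⟩,
        ⟨B.z, B.gens.erase f, fun g hg => B.lt_gens g (Finset.mem_of_mem_erase hg)⟩,
        fun h => by have h2 := congrArg GEL.z h; exact hmz h2, fun C => ?_⟩
      constructor
      · rintro ⟨hm1, hm2, hCB, hCA⟩
        obtain ⟨hcC, hor⟩ := mid_cases hcard hm1 hm2 hCB hCA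
        rcases hor with ⟨hCz, hAC, hCG⟩ | ⟨d₀, hd₀C, hmd, huni, hHimg, hlt, hsplit⟩
        · refine Or.inl (gext hCz ?_)
          exact Finset.eq_of_subset_of_card_le hCG
            (by show (B.cg A.z).card ≤ C.gens.card; omega)
        · rcases hsplit with ⟨hCzB, f', hf'G, hf'C, hCgens⟩ | ⟨hCzG, hCcg, huniq2⟩
          · -- C.z = B.z, C.gens = B.gens.erase f'
            have hd₀G : d₀ ∈ B.gens := by
              rw [hCgens] at hd₀C; exact Finset.mem_of_mem_erase hd₀C
            have hd₀sg : d₀ = sg := hSmem d₀ hd₀G (le_sup_left.trans_eq hmd.symm)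
            have hf'm : ¬ f' ≤ A.z := by
              intro hle
              have := hSmem f' hf'G hle
              rw [hCgens] at hd₀C
              exact (Finset.mem_erase.mp hd₀C).1 (hd₀sg.trans this.symm)
            -- f' ⊔ A.z is not in A.gens
            have hf'img : f' ⊔ A.z ∈ B.cg A.z := by
              rw [cg_eq_image_sdiff]
              exact Finset.mem_image.mpr ⟨f', hnotS f' hf'G hf'm, rfl⟩
            have hf'notH : f' ⊔ A.z ∉ A.gens := by
              intro hmem
              rw [hHimg] at hmem
              obtain ⟨u, hu, huf⟩ := Finset.mem_image.mp hmem
              have huC : u ∈ C.gens := Finset.mem_of_mem_erase hu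
              have huG : u ∈ B.gens := by
                rw [hCgens] at huC; exact Finset.mem_of_mem_erase huC
              have huf' : u ≠ f' := by
                rw [hCgens] at huC; exact (Finset.mem_erase.mp huC).1
              have hum : ¬ u ≤ A.z := by
                intro hle
                exact (Finset.mem_erase.mp hu).1 (huni u huC hle)
              exact huf' (hinj (Finset.mem_coe.mpr (hnotS u huG hum))
                (Finset.mem_coe.mpr (hnotS f' hf'G hf'm)) huf)
            have hf'e : f' ⊔ A.z = e := by
              have : f' ⊔ A.z ∈ B.cg A.z \ A.gens := Finset.mem_sdiff.mpr ⟨hf'img, hf'notH⟩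
              rw [hsingle] at this
              exact Finset.mem_singleton.mp this
            have hf'f : f' = f :=
              hinj (Finset.mem_coe.mpr (hnotS f' hf'G hf'm)) (Finset.mem_coe.mpr hf)
                (by show f' ⊔ A.z = f ⊔ A.z; rw [hf'e, hfe])
            exact Or.inr (gext hCzB (by rw [hCgens, hf'f]))
          · -- C.z a generator: impossible since then C.z = sg = A.z
            have : C.z = sg := hSmem C.z hCzG hlt.le
            rw [← hms] at this
            exact absurd this hlt.ne
      · have hXB : (⟨A.z, B.cg A.z, fun x hx => lt_of_mem_cg hx⟩ : GEL L) ≠ B :=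
          fun h => by have h2 := congrArg GEL.z h; exact hmz h2
        rintro (rfl | rfl)
        · refine ⟨rep_minor ⟨⟨{sg}, Finset.singleton_subset_iff.mpr hsmem.1, ?_⟩,
            Finset.Subset.refl _⟩, rep_minor ⟨⟨∅, Finset.empty_subset _, by simp⟩, ?_⟩, hXB, ?_⟩
          · show A.z = Finset.sup {sg} id ⊔ B.z
            rw [Finset.sup_singleton]
            show A.z = sg ⊔ B.z
            rw [sup_eq_left.mpr hzs.le, hms]
          · show A.gens ⊆ cg _ A.z
            have : cg (⟨A.z, B.cg A.z, fun x hx => lt_of_mem_cg hx⟩ : GEL L) A.z = B.cg A.z :=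
              cg_z _
            rw [this]
            exact hH
          · intro h
            have := congrArg (fun M => M.gens.card) h
            simp only at this
            omega
        · refine ⟨rep_minor ⟨⟨∅, Finset.empty_subset _, by simp⟩, ?_⟩,
            rep_minor ⟨⟨{sg}, ?_, ?_⟩, ?_⟩, ?_, ?_⟩
          · show B.gens.erase f ⊆ B.cg B.z
            rw [cg_z]
            exact Finset.erase_subset _ _
          · exact Finset.singleton_subset_iff.mpr (Finset.mem_erase.mpr ⟨Ne.symm hfsg, hsmem.1⟩)
          · show A.z = Finset.sup {sg} id ⊔ B.z
            rw [Finset.sup_singleton]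
            show A.z = sg ⊔ B.z
            rw [sup_eq_left.mpr hzs.le, hms]
          · show A.gens ⊆ cg _ A.z
            intro x hx
            have hxcg : x ∈ B.cg A.z := hH hx
            rw [cg_eq_image_sdiff] at hxcg
            obtain ⟨g, hg, rfl⟩ := Finset.mem_image.mp hxcg
            have hgG := (Finset.mem_sdiff.mp hg).1
            have hgm : ¬ g ≤ A.z := fun hle =>
              (Finset.mem_sdiff.mp hg).2 (Finset.mem_filter.mpr ⟨hgG, hle⟩)
            have hgf : g ≠ f := by
              intro he
              subst he
              exact heH (hfe ▸ hx)
            simp only [cg, Finset.mem_erase, Finset.mem_image]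
            exact ⟨fun he => hgm (sup_eq_right.mp he), g, ⟨hgf, hgG⟩, rfl⟩
          · intro h
            have := congrArg (fun M => M.gens.card) h
            simp only [Finset.card_erase_of_mem hfG] at this
            omega
          · intro h
            have := congrArg (fun M => M.gens.card) h
            simp only [Finset.card_erase_of_mem hfG] at this
            omega
    · -- δ = 0 : A.gens = B.cg A.z and there is a collision
      have hHcg : A.gens = B.cg A.z := Finset.eq_of_subset_of_card_le hH (by omega)
      have hnoinj : ¬ Set.InjOn (· ⊔ A.z) ↑(B.gens \ B.gens.filter (· ≤ A.z)) := by
        rw [← Finset.card_image_iff, ← cg_eq_image_sdiff, hsd1]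
        omega
      have hcoll : ∃ gc ∈ B.gens \ B.gens.filter (· ≤ A.z),
          ∃ hc ∈ B.gens \ B.gens.filter (· ≤ A.z), gc ⊔ A.z = hc ⊔ A.z ∧ gc ≠ hc := by
        by_contra hcon
        push_neg at hcon
        exact hnoinj fun x hx y hy hxy => by
          by_contra hne
          exact hne (hcon x (Finset.mem_coe.mp hx) y (Finset.mem_coe.mp hy) hxy)
      obtain ⟨gc, hgc, hc, hhc, hceq, hcne⟩ := hcoll
      have key : ∀ c c', c ∈ B.gens \ B.gens.filter (· ≤ A.z) →
          c' ∈ B.gens \ B.gens.filter (· ≤ A.z) → c ⊔ A.z = c' ⊔ A.z → c ≠ c' →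
          ∀ (pf : ∀ g ∈ B.gens.erase c, B.z < g),
          Minor B ⟨B.z, B.gens.erase c, pf⟩ ∧ Minor (⟨B.z, B.gens.erase c, pf⟩ : GEL L) A ∧
          (⟨B.z, B.gens.erase c, pf⟩ : GEL L) ≠ B ∧ (⟨B.z, B.gens.erase c, pf⟩ : GEL L) ≠ A := by
        intro c c' hcmem hc'mem heq hne pf
        have hcG := (Finset.mem_sdiff.mp hcmem).1
        have hcm : ¬ c ≤ A.z := fun hle =>
          (Finset.mem_sdiff.mp hcmem).2 (Finset.mem_filter.mpr ⟨hcG, hle⟩)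
        have hc'G := (Finset.mem_sdiff.mp hc'mem).1
        have hcsg : c ≠ sg := fun he => hcm (he ▸ hsmem.2)
        refine ⟨rep_minor ⟨⟨∅, Finset.empty_subset _, by simp⟩, ?_⟩,
          rep_minor ⟨⟨{sg}, ?_, ?_⟩, ?_⟩, ?_, ?_⟩
        · show B.gens.erase c ⊆ B.cg B.z
          rw [cg_z]
          exact Finset.erase_subset _ _
        · exact Finset.singleton_subset_iff.mpr (Finset.mem_erase.mpr ⟨Ne.symm hcsg, hsmem.1⟩)
        · show A.z = Finset.sup {sg} id ⊔ B.z
          rw [Finset.sup_singleton]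
          show A.z = sg ⊔ B.z
          rw [sup_eq_left.mpr hzs.le, hms]
        · show A.gens ⊆ cg _ A.z
          intro x hx
          have hxcg : x ∈ B.cg A.z := hH hx
          rw [cg_eq_image_sdiff] at hxcg
          obtain ⟨g, hg, rfl⟩ := Finset.mem_image.mp hxcg
          have hgG := (Finset.mem_sdiff.mp hg).1
          have hgm : ¬ g ≤ A.z := fun hle =>
            (Finset.mem_sdiff.mp hg).2 (Finset.mem_filter.mpr ⟨hgG, hle⟩)
          simp only [cg, Finset.mem_erase, Finset.mem_image]
          refine ⟨fun he => hgm (sup_eq_right.mp he), ?_⟩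
          by_cases hgc' : g = c
          · exact ⟨c', ⟨hne.symm, hc'G⟩, by rw [← heq, hgc']⟩
          · exact ⟨g, ⟨hgc', hgG⟩, rfl⟩
        · intro h
          have := congrArg (fun M => M.gens.card) h
          simp only [Finset.card_erase_of_mem hcG] at this
          omega
        · intro h
          have := congrArg (fun M => M.gens.card) h
          simp only [Finset.card_erase_of_mem hcG] at this
          omega
      refine ⟨⟨B.z, B.gens.erase gc, fun g hg => B.lt_gens g (Finset.mem_of_mem_erase hg)⟩,
        ⟨B.z, B.gens.erase hc, fun g hg => B.lt_gens g (Finset.mem_of_mem_erase hg)⟩,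
        ?_, fun C => ?_⟩
      · intro h
        have := congrArg GEL.gens h
        simp only at this
        have hmem : hc ∈ B.gens.erase gc :=
          Finset.mem_erase.mpr ⟨hcne.symm, (Finset.mem_sdiff.mp hhc).1⟩
        rw [this] at hmem
        exact (Finset.mem_erase.mp hmem).1 rfl
      constructor
      · rintro ⟨hm1, hm2, hCB, hCA⟩
        obtain ⟨hcC, hor⟩ := mid_cases hcard hm1 hm2 hCB hCA
        rcases hor with ⟨hCz, hAC, hCG⟩ | ⟨d₀, hd₀C, hmd, huni, hHimg, hlt, hsplit⟩
        · exfalso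
          rw [← hHcg] at hCG
          have := Finset.card_le_card hCG
          omega
        · rcases hsplit with ⟨hCzB, f', hf'G, hf'C, hCgens⟩ | ⟨hCzG, hCcg, huniq2⟩
          · have hd₀G : d₀ ∈ B.gens := by
              rw [hCgens] at hd₀C; exact Finset.mem_of_mem_erase hd₀C
            have hd₀sg : d₀ = sg := hSmem d₀ hd₀G (le_sup_left.trans_eq hmd.symm)
            have hf'm : ¬ f' ≤ A.z := by
              intro hle
              have := hSmem f' hf'G hle
              rw [hCgens] at hd₀C
              exact (Finset.mem_erase.mp hd₀C).1 (hd₀sg.trans this.symm)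
            -- f' must be one of the (unique) collision pair
            have hf'in : f' = gc ∨ f' = hc := by
              by_contra hcon
              push_neg at hcon
              -- then the image of the doubly-erased set is too small
              have hWsub : B.gens \ B.gens.filter (· ≤ A.z) ⊆ B.gens := Finset.sdiff_subset
              have hgcW : gc ∈ (C.gens.erase d₀) := by
                rw [hCgens, hd₀sg]
                refine Finset.mem_erase.mpr ⟨?_, Finset.mem_erase.mpr ⟨?_, (Finset.mem_sdiff.mp hgc).1⟩⟩
                · intro he
                  exact (Finset.mem_sdiff.mp hgc).2
                    (Finset.mem_filter.mpr ⟨(Finset.mem_sdiff.mp hgc).1, he ▸ hsmem.2⟩)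
                · exact fun he => hcon.1 he.symm
              have hhcW : hc ∈ (C.gens.erase d₀) := by
                rw [hCgens, hd₀sg]
                refine Finset.mem_erase.mpr ⟨?_, Finset.mem_erase.mpr ⟨?_, (Finset.mem_sdiff.mp hhc).1⟩⟩
                · intro he
                  exact (Finset.mem_sdiff.mp hhc).2
                    (Finset.mem_filter.mpr ⟨(Finset.mem_sdiff.mp hhc).1, he ▸ hsmem.2⟩)
                · exact fun he => hcon.2 he.symm
              have hcardW : (C.gens.erase d₀).card = A.gens.card := by
                rw [Finset.card_erase_of_mem hd₀C]; omega
              have := image_collision (f := fun x => x ⊔ A.z) hgcW hhcW hcne hceq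
              have hcard2 : A.gens.card ≤ ((C.gens.erase d₀).erase gc).card := by
                rw [hHimg, this]
                exact Finset.card_image_le
              rw [Finset.card_erase_of_mem hgcW, hcardW] at hcard2
              have hpos : 0 < (C.gens.erase d₀).card := Finset.card_pos.mpr ⟨gc, hgcW⟩
              omega
            rcases hf'in with rfl | rfl
            · exact Or.inl (gext hCzB (by rw [hCgens]))
            · exact Or.inr (gext hCzB (by rw [hCgens]))
          · have : C.z = sg := hSmem C.z hCzG hlt.le
            rw [← hms] at this
            exact absurd this hlt.ne
      · rintro (rfl | rfl)
        · exact key gc hc hgc hhc hceq hcne _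
        · exact key hc gc hhc hgc hceq.symm hcne.symm _
  · -- Case |S| = 2
    obtain ⟨s₁, s₂, hs12, hpairS⟩ := Finset.card_eq_two.mp h2
    have hs₁ : s₁ ∈ B.gens ∧ s₁ ≤ A.z := by
      have : s₁ ∈ B.gens.filter (· ≤ A.z) := by rw [hpairS]; simp
      exact Finset.mem_filter.mp this
    have hs₂ : s₂ ∈ B.gens ∧ s₂ ≤ A.z := by
      have : s₂ ∈ B.gens.filter (· ≤ A.z) := by rw [hpairS]; simp
      exact Finset.mem_filter.mp this
    have hSmem2 : ∀ u ∈ B.gens, u ≤ A.z → u = s₁ ∨ u = s₂ := by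
      intro u hu hule
      have : u ∈ B.gens.filter (· ≤ A.z) := Finset.mem_filter.mpr ⟨hu, hule⟩
      rw [hpairS] at this
      simpa using this
    have hm12 : A.z = s₁ ⊔ s₂ := by
      rw [hpairS] at hmS
      simp only [Finset.sup_insert, Finset.sup_singleton, id] at hmS
      rw [hmS]
      exact sup_eq_left.mpr ((B.lt_gens s₁ hs₁.1).le.trans le_sup_left)
    -- validity of the contraction candidate ⟨s, B.cg s⟩
    have key2 : ∀ s t : L, s ∈ B.gens → t ∈ B.gens → s ≤ A.z → A.z = t ⊔ s → ¬ t ≤ s →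
        ∀ (pf : ∀ x ∈ B.cg s, s < x),
        Minor B ⟨s, B.cg s, fun x hx => pf x hx⟩ ∧
        Minor (⟨s, B.cg s, fun x hx => pf x hx⟩ : GEL L) A ∧
        (⟨s, B.cg s, fun x hx => pf x hx⟩ : GEL L) ≠ B ∧
        (⟨s, B.cg s, fun x hx => pf x hx⟩ : GEL L) ≠ A := by
      intro s t hsG htG hsle hmts hts pf
      have hzs : B.z < s := B.lt_gens s hsG
      have htscg : t ⊔ s ∈ B.cg s := by
        simp only [cg, Finset.mem_erase, Finset.mem_image]
        exact ⟨fun he => hts (sup_eq_right.mp he), t, htG, rfl⟩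
      refine ⟨rep_minor ⟨⟨{s}, Finset.singleton_subset_iff.mpr hsG, ?_⟩, ?_⟩,
        rep_minor ⟨⟨{t ⊔ s}, Finset.singleton_subset_iff.mpr htscg, ?_⟩, ?_⟩, ?_, ?_⟩
      · show s = Finset.sup {s} id ⊔ B.z
        rw [Finset.sup_singleton]
        show s = s ⊔ B.z
        rw [sup_eq_left.mpr hzs.le]
      · exact Finset.Subset.refl _
      · show A.z = Finset.sup {t ⊔ s} id ⊔ s
        rw [Finset.sup_singleton]
        show A.z = t ⊔ s ⊔ s
        rw [sup_assoc, sup_idem, hmts]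
      · show A.gens ⊆ cg _ A.z
        intro x hx
        have hxcg : x ∈ B.cg A.z := hH hx
        rw [cg_eq_image_sdiff] at hxcg
        obtain ⟨g, hg, rfl⟩ := Finset.mem_image.mp hxcg
        have hgG := (Finset.mem_sdiff.mp hg).1
        have hgm : ¬ g ≤ A.z := fun hle =>
          (Finset.mem_sdiff.mp hg).2 (Finset.mem_filter.mpr ⟨hgG, hle⟩)
        have hgs : g ⊔ s ∈ B.cg s := by
          simp only [cg, Finset.mem_erase, Finset.mem_image]
          exact ⟨fun he => hgm ((sup_eq_right.mp he).trans hsle), g, hgG, rfl⟩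
        show g ⊔ A.z ∈ ((B.cg s).image (· ⊔ A.z)).erase A.z
        refine Finset.mem_erase.mpr ⟨fun he => hgm (sup_eq_right.mp he), ?_⟩
        refine Finset.mem_image.mpr ⟨g ⊔ s, hgs, ?_⟩
        show g ⊔ s ⊔ A.z = g ⊔ A.z
        rw [sup_assoc, sup_eq_right.mpr hsle]
      · intro h
        have h2 := congrArg GEL.z h
        simp only at h2
        exact hzs.ne' h2
      · intro h
        have h2 := congrArg GEL.z h
        simp only at h2
        rw [hmts] at h2
        exact hts (sup_eq_right.mp h2.symm)
    -- validity of the deletion candidate ⟨B.z, B.gens.erase s⟩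
    have keyz : ∀ s t : L, s ∈ B.gens → t ∈ B.gens → s ≠ t → s ≤ A.z → A.z = t →
        ∀ (pf : ∀ g ∈ B.gens.erase s, B.z < g),
        Minor B ⟨B.z, B.gens.erase s, pf⟩ ∧
        Minor (⟨B.z, B.gens.erase s, pf⟩ : GEL L) A ∧
        (⟨B.z, B.gens.erase s, pf⟩ : GEL L) ≠ B ∧
        (⟨B.z, B.gens.erase s, pf⟩ : GEL L) ≠ A := by
      intro s t hsG htG hst hsle hmt pf
      have hzt : B.z < t := B.lt_gens t htG
      refine ⟨rep_minor ⟨⟨∅, Finset.empty_subset _, by simp⟩, ?_⟩,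
        rep_minor ⟨⟨{t}, Finset.singleton_subset_iff.mpr
          (Finset.mem_erase.mpr ⟨hst.symm, htG⟩), ?_⟩, ?_⟩, ?_, ?_⟩
      · show B.gens.erase s ⊆ B.cg B.z
        rw [cg_z]
        exact Finset.erase_subset _ _
      · show A.z = Finset.sup {t} id ⊔ B.z
        rw [Finset.sup_singleton]
        show A.z = t ⊔ B.z
        rw [sup_eq_left.mpr hzt.le, hmt]
      · show A.gens ⊆ cg _ A.z
        intro x hx
        have hxcg : x ∈ B.cg A.z := hH hx
        rw [cg_eq_image_sdiff] at hxcg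
        obtain ⟨g, hg, rfl⟩ := Finset.mem_image.mp hxcg
        have hgG := (Finset.mem_sdiff.mp hg).1
        have hgm : ¬ g ≤ A.z := fun hle =>
          (Finset.mem_sdiff.mp hg).2 (Finset.mem_filter.mpr ⟨hgG, hle⟩)
        have hgs : g ≠ s := fun he => hgm (he ▸ hsle)
        simp only [cg, Finset.mem_erase, Finset.mem_image]
        exact ⟨fun he => hgm (sup_eq_right.mp he), g, ⟨hgs, hgG⟩, rfl⟩
      · intro h
        have := congrArg (fun M => M.gens.card) h
        simp only [Finset.card_erase_of_mem hsG] at this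
        omega
      · intro h
        have := congrArg (fun M => M.gens.card) h
        simp only [Finset.card_erase_of_mem hsG] at this
        omega
    -- forward analysis
    have fwd : ∀ C, Minor B C → Minor C A → C ≠ B → C ≠ A →
        (∃ s t : L, ((s = s₁ ∧ t = s₂) ∨ (s = s₂ ∧ t = s₁)) ∧ A.z = t ∧
          C.z = B.z ∧ C.gens = B.gens.erase s) ∨
        (∃ s t : L, ((s = s₁ ∧ t = s₂) ∨ (s = s₂ ∧ t = s₁)) ∧ ¬ t ≤ s ∧
          C.z = s ∧ C.gens = B.cg s) := by
      intro C hm1 hm2 hCB hCA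
      obtain ⟨hcC, hor⟩ := mid_cases hcard hm1 hm2 hCB hCA
      rcases hor with ⟨hCz, hAC, hCG⟩ | ⟨d₀, hd₀C, hmd, huni, hHimg, hlt, hsplit⟩
      · exfalso
        have hb1 := Finset.card_le_card hCG
        have hb2 := card_cg_add_le B A.z
        omega
      rcases hsplit with ⟨hCzB, f', hf'G, hf'C, hCgens⟩ | ⟨hCzG, hCcg, huniq2⟩
      · -- C.z = B.z, C.gens = B.gens.erase f'
        have hd₀G : d₀ ∈ B.gens := by
          rw [hCgens] at hd₀C; exact Finset.mem_of_mem_erase hd₀C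
        have hd₀m : d₀ ≤ A.z := le_sup_left.trans_eq hmd.symm
        have hmd₀ : A.z = d₀ := by
          rw [hmd, hCzB]
          exact sup_eq_left.mpr (B.lt_gens d₀ hd₀G).le
        have hf'S : f' = s₁ ∨ f' = s₂ := by
          by_contra hcon
          push_neg at hcon
          have h₁C : s₁ ∈ C.gens := by
            rw [hCgens]; exact Finset.mem_erase.mpr ⟨fun he => hcon.1 he.symm, hs₁.1⟩
          have h₂C : s₂ ∈ C.gens := by
            rw [hCgens]; exact Finset.mem_erase.mpr ⟨fun he => hcon.2 he.symm, hs₂.1⟩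
          exact hs12 ((huni s₁ h₁C hs₁.2).trans (huni s₂ h₂C hs₂.2).symm)
        have hf'd₀ : f' ≠ d₀ := by
          rw [hCgens] at hd₀C
          exact fun he => (Finset.mem_erase.mp hd₀C).1 he.symm
        have hd₀S : d₀ = s₁ ∨ d₀ = s₂ := hSmem2 d₀ hd₀G hd₀m
        refine Or.inl ⟨f', d₀, ?_, hmd₀, hCzB, hCgens⟩
        rcases hf'S with rfl | rfl
        · rcases hd₀S with he | he
          · exact absurd he.symm hf'd₀
          · exact Or.inl ⟨rfl, he⟩
        · rcases hd₀S with he | he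
          · exact Or.inr ⟨rfl, he⟩
          · exact absurd he.symm hf'd₀
      · -- C.z ∈ B.gens, C.gens = B.cg C.z
        have hCzS : C.z = s₁ ∨ C.z = s₂ := hSmem2 C.z hCzG hlt.le
        rcases hCzS with he | he
        · refine Or.inr ⟨s₁, s₂, Or.inl ⟨rfl, rfl⟩, ?_, he, by rw [← he]; exact hCcg⟩
          intro hle
          have := huniq2 s₂ hs₂.1 (he ▸ hle)
          rw [he] at this
          exact hs12 this.symm
        · refine Or.inr ⟨s₂, s₁, Or.inr ⟨rfl, rfl⟩, ?_, he, by rw [← he]; exact hCcg⟩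
          intro hle
          have := huniq2 s₁ hs₁.1 (he ▸ hle)
          rw [he] at this
          exact hs12 this
    by_cases h12 : s₁ ≤ s₂
    · -- s₁ ≤ s₂ (hence s₂ ≰ s₁): candidates ⟨z, erase s₁⟩ and ⟨s₁, cg s₁⟩
      have h21 : ¬ s₂ ≤ s₁ := fun hle => hs12 (le_antisymm h12 hle)
      have hmt : A.z = s₂ := by rw [hm12]; exact sup_eq_right.mpr h12
      refine ⟨⟨B.z, B.gens.erase s₁, fun g hg => B.lt_gens g (Finset.mem_of_mem_erase hg)⟩,
        ⟨s₁, B.cg s₁, fun x hx => lt_of_mem_cg hx⟩, ?_, fun C => ?_⟩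
      · intro h
        have h2 := congrArg GEL.z h
        simp only at h2
        exact (B.lt_gens s₁ hs₁.1).ne h2
      constructor
      · rintro ⟨hm1, hm2, hCB, hCA⟩
        rcases fwd C hm1 hm2 hCB hCA with ⟨s, t, hstor, hmt', hCz, hCgens⟩ |
          ⟨s, t, hstor, hts, hCz, hCgens⟩
        · rcases hstor with ⟨rfl, rfl⟩ | ⟨rfl, rfl⟩
          · exact Or.inl (gext hCz hCgens)
          · exact absurd (hmt'.symm.trans hmt) hs12
        · rcases hstor with ⟨rfl, rfl⟩ | ⟨rfl, rfl⟩
          · exact Or.inr (gext hCz hCgens)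
          · exact absurd h12 hts
      · rintro (rfl | rfl)
        · exact keyz s₁ s₂ hs₁.1 hs₂.1 hs12 hs₁.2 hmt _
        · exact key2 s₁ s₂ hs₁.1 hs₂.1 hs₁.2 (by rw [hm12, sup_comm]) h21 _
    by_cases h21 : s₂ ≤ s₁
    · -- s₂ ≤ s₁ : symmetric
      have hmt : A.z = s₁ := by rw [hm12]; exact sup_eq_left.mpr h21
      refine ⟨⟨B.z, B.gens.erase s₂, fun g hg => B.lt_gens g (Finset.mem_of_mem_erase hg)⟩,
        ⟨s₂, B.cg s₂, fun x hx => lt_of_mem_cg hx⟩, ?_, fun C => ?_⟩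
      · intro h
        have h2 := congrArg GEL.z h
        simp only at h2
        exact (B.lt_gens s₂ hs₂.1).ne h2
      constructor
      · rintro ⟨hm1, hm2, hCB, hCA⟩
        rcases fwd C hm1 hm2 hCB hCA with ⟨s, t, hstor, hmt', hCz, hCgens⟩ |
          ⟨s, t, hstor, hts, hCz, hCgens⟩
        · rcases hstor with ⟨rfl, rfl⟩ | ⟨rfl, rfl⟩
          · exact absurd (hmt.symm.trans hmt') hs12
          · exact Or.inl (gext hCz hCgens)
        · rcases hstor with ⟨rfl, rfl⟩ | ⟨rfl, rfl⟩
          · exact absurd h21 hts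
          · exact Or.inr (gext hCz hCgens)
      · rintro (rfl | rfl)
        · exact keyz s₂ s₁ hs₂.1 hs₁.1 (Ne.symm hs12) hs₂.2 hmt _
        · exact key2 s₂ s₁ hs₂.1 hs₁.1 hs₂.2 (by rw [hm12]) h12 _
    · -- incomparable: the two contractions
      refine ⟨⟨s₁, B.cg s₁, fun x hx => lt_of_mem_cg hx⟩,
        ⟨s₂, B.cg s₂, fun x hx => lt_of_mem_cg hx⟩, ?_, fun C => ?_⟩
      · intro h
        have h2 := congrArg GEL.z h
        simp only at h2
        exact hs12 h2
      constructor
      · rintro ⟨hm1, hm2, hCB, hCA⟩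
        rcases fwd C hm1 hm2 hCB hCA with ⟨s, t, hstor, hmt', hCz, hCgens⟩ |
          ⟨s, t, hstor, hts, hCz, hCgens⟩
        · exfalso
          rcases hstor with ⟨rfl, rfl⟩ | ⟨rfl, rfl⟩
          · exact h12 (sup_eq_right.mp (hm12.symm.trans hmt'))
          · exact h21 (sup_eq_left.mp (hm12.symm.trans hmt'))
        · rcases hstor with ⟨rfl, rfl⟩ | ⟨rfl, rfl⟩
          · exact Or.inl (gext hCz hCgens)
          · exact Or.inr (gext hCz hCgens)
      · rintro (rfl | rfl)
        · exact key2 s₁ s₂ hs₁.1 hs₂.1 hs₁.2 (by rw [hm12, sup_comm]) h21 _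
        · exact key2 s₂ s₁ hs₂.1 hs₁.1 hs₂.2 (by rw [hm12]) h12 _

theorem bottom_case (B : GEL L) (h1 : B.gens.card = 1) :
    ∃ X Y : GEL L, X ≠ Y ∧ ∀ C, (Minor B C ∧ C ≠ B) ↔ (C = X ∨ C = Y) := by
  obtain ⟨g, hg⟩ := Finset.card_eq_one.mp h1
  have hzg : B.z < g := B.lt_gens g (by rw [hg]; exact Finset.mem_singleton_self g)
  refine ⟨⟨B.z, ∅, by simp⟩, ⟨g, ∅, by simp⟩, ?_, fun C => ?_⟩
  · intro h
    exact absurd (congrArg GEL.z h) hzg.ne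
  constructor
  · rintro ⟨hm, hne⟩
    obtain ⟨⟨I, hI, hz⟩, hgens⟩ := minor_rep hm
    rw [hg] at hI
    rcases Finset.subset_singleton_iff.mp hI with rfl | rfl
    · simp only [Finset.sup_empty, bot_sup_eq] at hz
      have hsub : C.gens ⊆ B.gens := by
        have := hgens; rwa [hz, cg_z] at this
      rw [hg] at hsub
      rcases Finset.subset_singleton_iff.mp hsub with he | he
      · exact Or.inl (gext hz he)
      · exact absurd (gext hz (he.trans hg.symm)) hne
    · rw [Finset.sup_singleton] at hz
      have hzgg : C.z = g := by rw [hz]; exact sup_eq_left.mpr hzg.le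
      have hcg : B.cg g = ∅ := by
        simp [cg, hg]
      have : C.gens = ∅ := by
        have := hgens
        rw [hzgg, hcg] at this
        exact Finset.subset_empty.mp this
      exact Or.inr (gext hzgg this)
  · rintro (rfl | rfl)
    · refine ⟨rep_minor ⟨⟨∅, Finset.empty_subset _, by simp⟩, by simp⟩, fun h => ?_⟩
      have := congrArg (fun M => M.gens.card) h
      simp [h1] at this
    · refine ⟨rep_minor ⟨⟨{g}, by rw [hg], ?_⟩, by simp⟩, fun h => ?_⟩
      · simp only [Finset.sup_singleton, id]
        exact (sup_eq_left.mpr hzg.le).symm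
      · exact absurd (congrArg GEL.z h).symm hzg.ne

end GEL

/-- The minor poset `M(L,G)` is thin: every interval of length two contains
exactly two elements strictly between its endpoints. -/
theorem minorPoset_thin {L : Type*} [Lattice L] [OrderBot L] [DecidableEq L]
    (T : GEL L) (a b : GEL.MP T) (hab : GEL.mple T a b)
    (hrk : GEL.mrank T b = GEL.mrank T a + 2) :
    ∃ x y : GEL.MP T, x ≠ y ∧
      {c : GEL.MP T | GEL.mple T a c ∧ GEL.mple T c b ∧ c ≠ a ∧ c ≠ b}
        = {x, y} := by
  match a, b with
  | none, none => simp [GEL.mrank] at hrk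
  | some A, none => exact hab.elim
  | none, some B =>
    have hB1 : B.1.gens.card = 1 := by simpa [GEL.mrank] using hrk
    obtain ⟨X, Y, hXY, hchar⟩ := GEL.bottom_case B.1 hB1
    have hBX : B.1.Minor X := ((hchar X).mpr (Or.inl rfl)).1
    have hBY : B.1.Minor Y := ((hchar Y).mpr (Or.inr rfl)).1
    refine ⟨some ⟨X, B.2.trans hBX⟩, some ⟨Y, B.2.trans hBY⟩, ?_, ?_⟩
    · simp [Subtype.ext_iff, hXY]
    · ext c
      match c with
      | none => simp [GEL.mple]
      | some C =>
        have := hchar C.1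
        simp only [Set.mem_setOf_eq, Set.mem_insert_iff, Set.mem_singleton_iff,
          GEL.mple, Option.some.injEq, Subtype.ext_iff, ne_eq, true_and]
        constructor
        · rintro ⟨hm, -, hne⟩
          exact this.mp ⟨hm, hne⟩
        · intro h
          obtain ⟨hm, hne⟩ := this.mpr (by tauto)
          refine ⟨hm, by simp, hne⟩
  | some A, some B =>
    have hBA : B.1.Minor A.1 := hab
    have hcard : B.1.gens.card = A.1.gens.card + 2 := by simpa [GEL.mrank] using hrk
    obtain ⟨X, Y, hXY, hchar⟩ := GEL.middle B.1 A.1 hBA hcard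
    have hBX : B.1.Minor X := ((hchar X).mpr (Or.inl rfl)).1
    have hBY : B.1.Minor Y := ((hchar Y).mpr (Or.inr rfl)).1
    refine ⟨some ⟨X, B.2.trans hBX⟩, some ⟨Y, B.2.trans hBY⟩, ?_, ?_⟩
    · simp [Subtype.ext_iff, hXY]
    · ext c
      match c with
      | none => simp [GEL.mple]
      | some C =>
        have := hchar C.1
        simp only [Set.mem_setOf_eq, Set.mem_insert_iff, Set.mem_singleton_iff,
          GEL.mple, Option.some.injEq, Subtype.ext_iff, ne_eq]
        constructor
        · rintro ⟨hCA, hBC, hne1, hne2⟩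
          exact this.mp ⟨hBC, hCA, hne2, hne1⟩
        · intro h
          obtain ⟨hBC, hCA, hne2, hne1⟩ := this.mpr (by tauto)
          exact ⟨hCA, hBC, hne1, hne2⟩
end
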